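/- arXiv:1903.01729 — 2 statements merged into one kernel-verified Lean document; each statement's English description precedes it below -/
import Mathlib

section
/- Let a, b, d, e be integers with a > 0, e ≥ 4, b > ae, d ≥ 4. Suppose a transversal arrangement of d curves has pairwise intersection number h = 2ab - a²e, number of singular points f_0, and satisfies ∑_{k≥2}k(k-1)t_k = h·d(d-1) with t_k = 0 for k ≥ d, and f_0 ≥ d. Then f_0 > 2ab - a²e + 1; in particular f_0 ≥ 2ab - a²e + 2 ≥ 4a² + 2a + 2 ≥ 8. -/
open Finset

/-- f₀ > 2ab - a²e + 1, hence f₀ ≥ 2ab - a²e + 2 ≥ 4a² + 2a + 2 ≥ 8. -/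
theorem stmt_5 (a b e : ℤ) (ha : 0 < a) (he : 4 ≤ e) (hb : a * e < b)
    (d : ℕ) (hd : 4 ≤ d) (t : ℕ → ℕ)
    (hsupp : ∀ k, t k ≠ 0 → 2 ≤ k ∧ k ≤ d - 1)
    (hcomb : ∑ k ∈ Finset.range (d + 1), (k : ℤ) * (k - 1) * t k
      = (2 * a * b - a ^ 2 * e) * d * (d - 1))
    (f0 : ℤ) (hf0 : f0 = ∑ k ∈ Finset.range (d + 1), (t k : ℤ))
    (hf0d : (d : ℤ) ≤ f0) :
    f0 > 2 * a * b - a ^ 2 * e + 1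
      ∧ f0 ≥ 2 * a * b - a ^ 2 * e + 2
      ∧ 2 * a * b - a ^ 2 * e + 2 ≥ 4 * a ^ 2 + 2 * a + 2
      ∧ 4 * a ^ 2 + 2 * a + 2 ≥ 8 := by
  set h : ℤ := 2 * a * b - a ^ 2 * e with hh
  have hb' : a * e + 1 ≤ b := hb
  have hge : h ≥ 4 * a ^ 2 + 2 * a := by
    have h1 : a * (a * e + 1) ≤ a * b := mul_le_mul_of_nonneg_left hb' ha.le
    have h2 : a ^ 2 * 4 ≤ a ^ 2 * e := by
      have : (0:ℤ) ≤ a ^ 2 := sq_nonneg a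
      exact mul_le_mul_of_nonneg_left he this
    nlinarith [sq_nonneg a, ha]
  have hh1 : 1 ≤ h := by nlinarith [sq_nonneg a, ha]
  -- key sum bound
  have key : h * d * (d - 1) ≤ ((d:ℤ) - 1) * ((d:ℤ) - 2) * f0 := by
    rw [hf0, Finset.mul_sum, ← hcomb]
    apply Finset.sum_le_sum
    intro k _
    by_cases hk : t k = 0
    · simp [hk]
    · obtain ⟨h2, hkd⟩ := hsupp k hk
      have hk1 : (k:ℤ) ≤ (d:ℤ) - 1 := by omega
      have hk2 : (k:ℤ) - 1 ≤ (d:ℤ) - 2 := by linarith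
      have hknn : (0:ℤ) ≤ (k:ℤ) - 1 := by
        have : (2:ℤ) ≤ k := by exact_mod_cast h2
        linarith
      have htnn : (0:ℤ) ≤ (t k : ℤ) := Int.natCast_nonneg _
      have : (k:ℤ) * ((k:ℤ) - 1) ≤ ((d:ℤ) - 1) * ((d:ℤ) - 2) :=
        mul_le_mul hk1 hk2 hknn (by linarith)
      exact mul_le_mul_of_nonneg_right this htnn
  have hdZ : (4:ℤ) ≤ (d:ℤ) := by exact_mod_cast hd
  have hstep : f0 * ((d:ℤ) - 2) ≥ h * d := by
    have hd1 : (0:ℤ) < (d:ℤ) - 1 := by linarith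
    have : (h * d) * ((d:ℤ) - 1) ≤ (f0 * ((d:ℤ) - 2)) * ((d:ℤ) - 1) := by linarith [key]
    exact le_of_mul_le_mul_right this hd1
  have hmain : f0 > h + 1 := by
    by_contra hc
    push_neg at hc
    -- then (h+1)(d-2) ≥ f0(d-2) ≥ h d, so d ≥ 2h+2, so f0 ≥ d ≥ 2h+2 > h+1
    have hd2 : (0:ℤ) ≤ (d:ℤ) - 2 := by linarith
    have : (h + 1) * ((d:ℤ) - 2) ≥ h * d := le_trans hstep (mul_le_mul_of_nonneg_right hc hd2)
    nlinarith
  refine ⟨hmain, by linarith, by linarith, by nlinarith [sq_nonneg a, ha]⟩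
end

section
/- Let a, b, d, e, g be integers with a ≥ 1, e ≥ 4, b ≥ ae, d ≥ 4, g ≥ 0, and suppose 16 - 16g = -d((3a-1)(2b-ae) + 2a(g-1)). If a ≥ 2, or if a = 1 and d ≥ 8, this equation has no solution. -/
/-- The ball quotient equation (5.4) has no solution when a ≥ 2, or a = 1 and d ≥ 8. -/
theorem stmt_15 (a b d e g : ℤ) (ha : 1 ≤ a) (he : 4 ≤ e) (hb : a * e ≤ b)
    (hd : 4 ≤ d) (hg : 0 ≤ g)
    (hcase : 2 ≤ a ∨ (a = 1 ∧ 8 ≤ d)) :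
    16 - 16 * g ≠ -d * ((3 * a - 1) * (2 * b - a * e) + 2 * a * (g - 1)) := by
  intro h
  have hpos : 0 < (3 * a - 1) * (2 * b - a * e) - 2 * a := by
    have h1 : a * e ≤ 2 * b - a * e := by linarith
    have h2 : a * (e * (3 * a - 1) - 2) ≤ (3 * a - 1) * (2 * b - a * e) - 2 * a := by
      nlinarith
    have h3 : 0 < a * (e * (3 * a - 1) - 2) := by
      have h4 : (2:ℤ) ≤ 3 * a - 1 := by linarith
      have h5 : (8:ℤ) ≤ e * (3 * a - 1) := by nlinarith
      have : (0:ℤ) < e * (3 * a - 1) - 2 := by linarith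
      exact mul_pos (by linarith) this
    linarith
  have h16 : 16 ≤ 2 * a * d := by
    rcases hcase with h2 | ⟨rfl, hd8⟩
    · nlinarith
    · nlinarith
  nlinarith [mul_nonneg (sub_nonneg.mpr h16) hg, mul_pos (by linarith : (0:ℤ) < d) hpos]
end
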